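/- Let F(x,t) = -log f(x,t) where f(x,t) = Σᵢ wᵢ G(xᵢ, Σᵢ + t·Id)(x). If for each i the matrix (Σᵢ + t·Id) - (x-xᵢ)(x-xᵢ)ᵀ is positive semidefinite at a point x, then the Hessian ∇ₓ²F(x,t) is positive semidefinite at x. -/

import Mathlib

/-- Multivariate Gaussian density `G(μ,Σ)(x)` on `ℝ^d`. -/
noncomputable def gauss {d : ℕ} (μ : Fin d → ℝ) (S : Matrix (Fin d) (Fin d) ℝ)
    (x : Fin d → ℝ) : ℝ :=
  ((2 * Real.pi) ^ d * S.det) ^ (-(1:ℝ)/2) *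
    Real.exp (-(1/2) * dotProduct (x - μ) (S⁻¹.mulVec (x - μ)))

/-- Hessian matrix of `f : ℝ^d → ℝ` at `x`. -/
noncomputable def hess {d : ℕ} (f : (Fin d → ℝ) → ℝ) (x : Fin d → ℝ) :
    Matrix (Fin d) (Fin d) ℝ :=
  fun i j => fderiv ℝ (fun y => fderiv ℝ f y (Pi.single j 1)) x (Pi.single i 1)


open Matrix

noncomputable def la {d : ℕ} (a : Fin d → ℝ) : (Fin d → ℝ) →L[ℝ] ℝ :=
  ∑ j, a j • (ContinuousLinearMap.proj j : (Fin d → ℝ) →L[ℝ] ℝ)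

lemma la_apply {d : ℕ} (a v : Fin d → ℝ) : la a v = dotProduct a v := by
  simp [la, dotProduct, ContinuousLinearMap.sum_apply]

lemma sum_smul_dotProduct {d n : ℕ} (c : Fin n → ℝ) (vv : Fin n → Fin d → ℝ) (v : Fin d → ℝ) :
    dotProduct (∑ m, c m • vv m) v = ∑ m, c m * dotProduct (vv m) v := by
  simp only [dotProduct, Finset.sum_apply, Pi.smul_apply, smul_eq_mul, Finset.sum_mul,
    Finset.mul_sum]
  rw [Finset.sum_comm]
  exact Finset.sum_congr rfl fun m _ => Finset.sum_congr rfl fun k _ => by ring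

lemma hasFDerivAt_quad {d : ℕ} (A : Matrix (Fin d) (Fin d) ℝ) (hA : A.IsSymm)
    (μ y : Fin d → ℝ) :
    HasFDerivAt (fun z => dotProduct (z - μ) (A.mulVec (z - μ)))
      (la ((2 : ℝ) • A.mulVec (y - μ))) y := by
  have key : ∀ j, HasFDerivAt (fun z : Fin d → ℝ => (z j - μ j) * (la (A j) z - la (A j) μ))
      (((y j - μ j) • la (A j)) + ((la (A j) y - la (A j) μ) • (ContinuousLinearMap.proj j : (Fin d → ℝ) →L[ℝ] ℝ))) y := by
    intro j
    have h1 : HasFDerivAt (fun z : Fin d → ℝ => z j - μ j)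
        (ContinuousLinearMap.proj j : (Fin d → ℝ) →L[ℝ] ℝ) y :=
      ((ContinuousLinearMap.proj j : (Fin d → ℝ) →L[ℝ] ℝ).hasFDerivAt).sub_const _
    have h2 : HasFDerivAt (fun z : Fin d → ℝ => la (A j) z - la (A j) μ) (la (A j)) y :=
      ((la (A j)).hasFDerivAt).sub_const _
    exact h1.mul h2
  have hsum := HasFDerivAt.fun_sum (fun j (_ : j ∈ Finset.univ) => key j)
  have hfun : (fun z : Fin d → ℝ => dotProduct (z - μ) (A.mulVec (z - μ)))
      = fun z => ∑ j, (z j - μ j) * (la (A j) z - la (A j) μ) := by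
    funext z
    simp [dotProduct, mulVec, la_apply, Pi.sub_apply, mul_sub, Finset.mul_sum]
  rw [hfun]
  refine hsum.congr_fderiv (Eq.symm ?_)
  ext v
  simp only [la_apply, ContinuousLinearMap.sum_apply, ContinuousLinearMap.add_apply,
    ContinuousLinearMap.smul_apply, ContinuousLinearMap.proj_apply, la_apply, smul_eq_mul]
  have h1 : ∑ j, ((y j - μ j) * dotProduct (A j) v) = dotProduct (y - μ) (A.mulVec v) := by
    simp [dotProduct, mulVec, Pi.sub_apply]
  have h2 : dotProduct (y - μ) (A.mulVec v) = dotProduct (A.mulVec (y - μ)) v := by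
    rw [Matrix.dotProduct_mulVec, ← Matrix.mulVec_transpose, hA.eq]
  calc dotProduct ((2:ℝ) • A.mulVec (y - μ)) v
      = 2 * dotProduct (A.mulVec (y - μ)) v := by rw [smul_dotProduct]; simp
    _ = ∑ j, ((y j - μ j) * dotProduct (A j) v + (dotProduct (A j) y - dotProduct (A j) μ) * v j) := by
        rw [Finset.sum_add_distrib, h1, ← h2]
        have : ∑ j, (dotProduct (A j) y - dotProduct (A j) μ) * v j
            = dotProduct (A.mulVec (y - μ)) v := by
          simp [dotProduct, mulVec, Pi.sub_apply, mul_sub, sub_mul, Finset.mul_sum]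
        rw [this, h2]; ring

lemma gauss_pos {d : ℕ} (μ : Fin d → ℝ) {S : Matrix (Fin d) (Fin d) ℝ}
    (hdet : 0 < S.det) (y : Fin d → ℝ) : 0 < gauss μ S y := by
  apply mul_pos _ (Real.exp_pos _)
  apply Real.rpow_pos_of_pos
  positivity

lemma hasFDerivAt_gauss {d : ℕ} (μ : Fin d → ℝ) {S : Matrix (Fin d) (Fin d) ℝ}
    (hA : (S⁻¹).IsSymm) (y : Fin d → ℝ) :
    HasFDerivAt (gauss μ S) ((-(gauss μ S y)) • la ((S⁻¹).mulVec (y - μ))) y := by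
  have hq := hasFDerivAt_quad (S⁻¹) hA μ y
  have hexp := ((hq.const_mul (-(1/2 : ℝ))).exp).const_mul
    (((2 * Real.pi) ^ d * S.det) ^ (-(1:ℝ)/2))
  refine hexp.congr_fderiv (Eq.symm ?_)
  ext v
  simp only [ContinuousLinearMap.smul_apply, la_apply, smul_eq_mul, gauss,
    smul_dotProduct]
  ring

lemma posSemidef_smul' {d : ℕ} {c : ℝ} (hc : 0 ≤ c) {M : Matrix (Fin d) (Fin d) ℝ}
    (hM : M.PosSemidef) : (c • M).PosSemidef := by
  refine Matrix.PosSemidef.of_dotProduct_mulVec_nonneg ?_ (fun v => ?_)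
  · unfold Matrix.IsHermitian
    ext i j
    simp only [Matrix.conjTranspose_apply, Matrix.smul_apply, star_trivial, smul_eq_mul]
    conv_rhs => rw [← hM.isHermitian.eq]
    simp [Matrix.conjTranspose_apply]
  · have := hM.dotProduct_mulVec_nonneg v
    simp only [star_trivial] at this ⊢
    rw [Matrix.smul_mulVec, dotProduct_smul]
    exact mul_nonneg hc this

lemma posSemidef_sum' {d n : ℕ} (B : Fin n → Matrix (Fin d) (Fin d) ℝ)
    (h : ∀ m, (B m).PosSemidef) : (∑ m, B m).PosSemidef := by
  classical
  refine Finset.sum_induction B Matrix.PosSemidef (fun a b ha hb => ha.add hb)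
    Matrix.PosSemidef.zero (fun m _ => h m)

lemma vecMulVec_mulVec' {d : ℕ} (a b v : Fin d → ℝ) :
    vecMulVec a b *ᵥ v = (dotProduct b v) • a := by
  funext i
  simp only [Matrix.mulVec, vecMulVec_apply, dotProduct, Pi.smul_apply, smul_eq_mul,
    Finset.mul_sum, Finset.sum_mul]
  exact Finset.sum_congr rfl (fun k _ => by ring)

lemma posSemidef_vecMulVec_self {d : ℕ} (a : Fin d → ℝ) : (vecMulVec a a).PosSemidef := by
  refine Matrix.PosSemidef.of_dotProduct_mulVec_nonneg ?_ (fun v => ?_)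
  · ext i j
    simp [Matrix.conjTranspose_apply, vecMulVec_apply, mul_comm]
  · simp only [star_trivial, vecMulVec_mulVec', dotProduct_smul, smul_eq_mul]
    rw [dotProduct_comm]
    exact mul_self_nonneg _

lemma quad_bound {d : ℕ} {S : Matrix (Fin d) (Fin d) ℝ} (hpd : S.PosDef) {a : Fin d → ℝ}
    (h : (S - vecMulVec a a).PosSemidef) (v : Fin d → ℝ) :
    (dotProduct (S⁻¹ *ᵥ a) v) ^ 2 ≤ dotProduct v (S⁻¹ *ᵥ v) := by
  have hT : Sᵀ = S := by
    ext i j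
    conv_rhs => rw [← hpd.isHermitian.eq]
    simp [Matrix.conjTranspose_apply]
  have hAT : (S⁻¹)ᵀ = S⁻¹ := by rw [Matrix.transpose_nonsing_inv, hT]
  have hdu : IsUnit S.det := isUnit_iff_ne_zero.mpr hpd.det_pos.ne'
  have h2 := h.dotProduct_mulVec_nonneg (S⁻¹ *ᵥ v)
  simp only [star_trivial] at h2
  rw [Matrix.sub_mulVec, dotProduct_sub, Matrix.mulVec_mulVec,
    Matrix.mul_nonsing_inv S hdu, Matrix.one_mulVec, vecMulVec_mulVec',
    dotProduct_smul, smul_eq_mul] at h2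
  have e1 : dotProduct (S⁻¹ *ᵥ v) v = dotProduct v (S⁻¹ *ᵥ v) := dotProduct_comm _ _
  have e2 : dotProduct a (S⁻¹ *ᵥ v) = dotProduct (S⁻¹ *ᵥ a) v := by
    rw [Matrix.dotProduct_mulVec, ← Matrix.vecMul_transpose, hAT]
  have e3 : dotProduct (S⁻¹ *ᵥ v) a = dotProduct (S⁻¹ *ᵥ a) v := by
    rw [dotProduct_comm]; exact e2
  rw [e1, e2, e3] at h2
  nlinarith [h2]

lemma hasFDerivAt_mulVec_coord {d : ℕ} (A : Matrix (Fin d) (Fin d) ℝ) (μ : Fin d → ℝ)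
    (j : Fin d) (y : Fin d → ℝ) :
    HasFDerivAt (fun z : Fin d → ℝ => (A *ᵥ (z - μ)) j) (la (A j)) y := by
  have hfun : (fun z : Fin d → ℝ => (A *ᵥ (z - μ)) j)
      = fun z => la (A j) z - dotProduct (A j) μ := by
    funext z
    simp [Matrix.mulVec, la_apply, dotProduct, Pi.sub_apply, mul_sub,
      Finset.sum_sub_distrib]
  rw [hfun]
  exact ((la (A j)).hasFDerivAt).sub_const _

/-- If for each `i` the matrix `(Σᵢ + t·Id) - (x-xᵢ)(x-xᵢ)ᵀ` is positive semidefinite at `x`,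
then the Hessian of `F(·,t) = -log f(·,t)` is positive semidefinite at `x`. -/
theorem smoothed_gmm_hessian_psd {d n : ℕ} (w : Fin n → ℝ) (hw : ∀ i, 0 ≤ w i)
    (hsum : ∑ i, w i = 1) (xs : Fin n → Fin d → ℝ)
    (Ss : Fin n → Matrix (Fin d) (Fin d) ℝ) (hS : ∀ i, (Ss i).PosSemidef)
    (t : ℝ) (ht : 0 < t) (x : Fin d → ℝ)
    (hpsd : ∀ i, ((Ss i + t • 1) -
      Matrix.vecMulVec (x - xs i) (x - xs i)).PosSemidef) :
    (hess (fun y => -Real.log (∑ i, w i * gauss (xs i) (Ss i + t • 1) y)) x).PosSemidef := by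
  classical
  -- basic facts about the covariance matrices
  have htone : ((t : ℝ) • (1 : Matrix (Fin d) (Fin d) ℝ)).PosDef := by
    have hd : (t : ℝ) • (1 : Matrix (Fin d) (Fin d) ℝ) = Matrix.diagonal (fun _ => t) := by
      ext i j
      simp [Matrix.one_apply, Matrix.diagonal_apply, mul_ite]
    rw [hd]
    exact Matrix.posDef_diagonal_iff.mpr (fun _ => ht)
  have hpd : ∀ m, (Ss m + t • 1).PosDef := fun m => Matrix.PosDef.posSemidef_add (hS m) htone
  have hdet : ∀ m, 0 < (Ss m + t • 1).det := fun m => (hpd m).det_pos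
  have hAT : ∀ m, ((Ss m + t • 1)⁻¹)ᵀ = (Ss m + t • 1)⁻¹ := by
    intro m
    rw [Matrix.transpose_nonsing_inv]
    congr 1
    ext i j
    conv_rhs => rw [← (hpd m).isHermitian.eq]
    simp [Matrix.conjTranspose_apply]
  have hAsym : ∀ m, ((Ss m + t • 1)⁻¹).IsSymm := hAT
  have hAij : ∀ m (i j : Fin d), (Ss m + t • 1)⁻¹ i j = (Ss m + t • 1)⁻¹ j i := by
    intro m i j
    conv_lhs => rw [← hAT m]
    rfl
  have hgpos : ∀ m y, 0 < gauss (xs m) (Ss m + t • 1) y := fun m y => gauss_pos _ (hdet m) y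
  -- positivity of the mixture
  have hfpos : ∀ y, 0 < ∑ m, w m * gauss (xs m) (Ss m + t • 1) y := by
    intro y
    obtain ⟨m₀, hm₀⟩ : ∃ m, w m ≠ 0 := by
      by_contra hc
      push_neg at hc
      rw [Finset.sum_eq_zero (fun i _ => hc i)] at hsum
      exact one_ne_zero hsum.symm
    refine Finset.sum_pos' (fun m _ => mul_nonneg (hw m) (hgpos m y).le) ⟨m₀, Finset.mem_univ _,
      mul_pos (lt_of_le_of_ne (hw m₀) (Ne.symm hm₀)) (hgpos m₀ y)⟩
  -- gradient vector of f
  have hf : ∀ y, HasFDerivAt (fun y => ∑ m, w m * gauss (xs m) (Ss m + t • 1) y)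
      (la (-(∑ m, (w m * gauss (xs m) (Ss m + t • 1) y) •
        ((Ss m + t • 1)⁻¹ *ᵥ (y - xs m))))) y := by
    intro y
    have hsum' := HasFDerivAt.fun_sum
      (fun m (_ : m ∈ Finset.univ) => (hasFDerivAt_gauss (xs m) (hAsym m) y).const_mul (w m))
    refine hsum'.congr_fderiv (Eq.symm ?_)
    ext v
    rw [la_apply, neg_dotProduct, sum_smul_dotProduct]
    simp only [ContinuousLinearMap.sum_apply, ContinuousLinearMap.smul_apply, smul_eq_mul]
    rw [← Finset.sum_neg_distrib]
    exact Finset.sum_congr rfl (fun m _ => by rw [la_apply]; ring)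
  -- derivative of F = -log f
  have hF : ∀ y, HasFDerivAt (fun y => -Real.log (∑ m, w m * gauss (xs m) (Ss m + t • 1) y))
      (la ((∑ m, w m * gauss (xs m) (Ss m + t • 1) y)⁻¹ •
        (∑ m, (w m * gauss (xs m) (Ss m + t • 1) y) • ((Ss m + t • 1)⁻¹ *ᵥ (y - xs m))))) y := by
    intro y
    have hlog := ((hf y).log (hfpos y).ne').neg
    refine hlog.congr_fderiv (Eq.symm ?_)
    ext v
    simp only [la_apply, ContinuousLinearMap.neg_apply, ContinuousLinearMap.smul_apply,
      smul_eq_mul, smul_dotProduct, neg_dotProduct]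
    ring
  -- the inner function of the Hessian
  have inner_eq : ∀ j : Fin d, (fun y => fderiv ℝ
        (fun y => -Real.log (∑ m, w m * gauss (xs m) (Ss m + t • 1) y)) y (Pi.single j 1))
      = fun y => (∑ m, (w m * gauss (xs m) (Ss m + t • 1) y) *
          ((Ss m + t • 1)⁻¹ *ᵥ (y - xs m)) j) *
          (∑ m, w m * gauss (xs m) (Ss m + t • 1) y)⁻¹ := by
    intro j
    funext y
    rw [(hF y).fderiv, la_apply, dotProduct_single]
    simp only [Pi.smul_apply, Finset.sum_apply, smul_eq_mul, mul_one]
    ring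
  -- derivative of the gradient coordinate functions
  have hGj : ∀ j : Fin d, HasFDerivAt (fun y => ∑ m, (w m * gauss (xs m) (Ss m + t • 1) y) *
        ((Ss m + t • 1)⁻¹ *ᵥ (y - xs m)) j)
      (∑ m, ((w m * gauss (xs m) (Ss m + t • 1) x) • la ((Ss m + t • 1)⁻¹ j) +
        ((Ss m + t • 1)⁻¹ *ᵥ (x - xs m)) j •
          (w m • ((-(gauss (xs m) (Ss m + t • 1) x)) •
            la ((Ss m + t • 1)⁻¹ *ᵥ (x - xs m)))))) x := by
    intro j
    exact HasFDerivAt.fun_sum (fun m _ =>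
      ((hasFDerivAt_gauss (xs m) (hAsym m) x).const_mul (w m)).mul
        (hasFDerivAt_mulVec_coord ((Ss m + t • 1)⁻¹) (xs m) j x))
  have hinv : HasFDerivAt (fun y => (∑ m, w m * gauss (xs m) (Ss m + t • 1) y)⁻¹)
      ((ContinuousLinearMap.smulRight (1 : ℝ →L[ℝ] ℝ)
          (-((∑ m, w m * gauss (xs m) (Ss m + t • 1) x) ^ 2)⁻¹)).comp
        (la (-(∑ m, (w m * gauss (xs m) (Ss m + t • 1) x) •
          ((Ss m + t • 1)⁻¹ *ᵥ (x - xs m)))))) x :=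
    (hasFDerivAt_inv (hfpos x).ne').comp x (hf x)
  have hbig : ∀ j : Fin d, HasFDerivAt (fun y => (∑ m, (w m * gauss (xs m) (Ss m + t • 1) y) *
        ((Ss m + t • 1)⁻¹ *ᵥ (y - xs m)) j) * (∑ m, w m * gauss (xs m) (Ss m + t • 1) y)⁻¹)
      ((∑ m, (w m * gauss (xs m) (Ss m + t • 1) x) * ((Ss m + t • 1)⁻¹ *ᵥ (x - xs m)) j) •
          ((ContinuousLinearMap.smulRight (1 : ℝ →L[ℝ] ℝ)
              (-((∑ m, w m * gauss (xs m) (Ss m + t • 1) x) ^ 2)⁻¹)).comp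
            (la (-(∑ m, (w m * gauss (xs m) (Ss m + t • 1) x) •
              ((Ss m + t • 1)⁻¹ *ᵥ (x - xs m)))))) +
        (∑ m, w m * gauss (xs m) (Ss m + t • 1) x)⁻¹ •
          (∑ m, ((w m * gauss (xs m) (Ss m + t • 1) x) • la ((Ss m + t • 1)⁻¹ j) +
            ((Ss m + t • 1)⁻¹ *ᵥ (x - xs m)) j •
              (w m • ((-(gauss (xs m) (Ss m + t • 1) x)) •
                la ((Ss m + t • 1)⁻¹ *ᵥ (x - xs m))))))) x :=
    fun j => (hGj j).mul hinv
  -- the explicit Hessian matrix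
  have hessEq : hess (fun y => -Real.log (∑ m, w m * gauss (xs m) (Ss m + t • 1) y)) x =
      (∑ m₀, w m₀ * gauss (xs m₀) (Ss m₀ + t • 1) x)⁻¹ •
        (∑ m, (w m * gauss (xs m) (Ss m + t • 1) x) •
          ((Ss m + t • 1)⁻¹ - vecMulVec ((Ss m + t • 1)⁻¹ *ᵥ (x - xs m))
            ((Ss m + t • 1)⁻¹ *ᵥ (x - xs m)))) +
      ((∑ m₀, w m₀ * gauss (xs m₀) (Ss m₀ + t • 1) x)⁻¹ *
        (∑ m₀, w m₀ * gauss (xs m₀) (Ss m₀ + t • 1) x)⁻¹) •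
        vecMulVec (∑ m, (w m * gauss (xs m) (Ss m + t • 1) x) •
            ((Ss m + t • 1)⁻¹ *ᵥ (x - xs m)))
          (∑ m, (w m * gauss (xs m) (Ss m + t • 1) x) • ((Ss m + t • 1)⁻¹ *ᵥ (x - xs m))) := by
    ext i j
    show fderiv ℝ (fun y => fderiv ℝ
      (fun y => -Real.log (∑ m, w m * gauss (xs m) (Ss m + t • 1) y)) y (Pi.single j 1)) x
      (Pi.single i 1) = _
    rw [inner_eq j, (hbig j).fderiv]
    simp only [ContinuousLinearMap.add_apply, ContinuousLinearMap.smul_apply,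
      ContinuousLinearMap.sum_apply, ContinuousLinearMap.coe_comp', Function.comp_apply,
      ContinuousLinearMap.smulRight_apply, ContinuousLinearMap.one_apply, la_apply,
      dotProduct_single, neg_dotProduct, smul_eq_mul, mul_one,
      Matrix.add_apply, Matrix.smul_apply, Matrix.sub_apply, vecMulVec_apply,
      Finset.sum_apply, Pi.smul_apply, Matrix.sum_apply, Pi.neg_apply]
    rw [show ((∑ m, w m * gauss (xs m) (Ss m + t • 1) x) ^ 2)⁻¹ =
      (∑ m, w m * gauss (xs m) (Ss m + t • 1) x)⁻¹ *
      (∑ m, w m * gauss (xs m) (Ss m + t • 1) x)⁻¹ from by rw [sq, mul_inv]]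
    rw [show ∑ m, (w m * gauss (xs m) (Ss m + t • 1) x * (Ss m + t • 1)⁻¹ j i +
        ((Ss m + t • 1)⁻¹ *ᵥ (x - xs m)) j * (w m * (-gauss (xs m) (Ss m + t • 1) x *
          ((Ss m + t • 1)⁻¹ *ᵥ (x - xs m)) i)))
      = ∑ m, (w m * gauss (xs m) (Ss m + t • 1) x) * ((Ss m + t • 1)⁻¹ i j -
          ((Ss m + t • 1)⁻¹ *ᵥ (x - xs m)) i * ((Ss m + t • 1)⁻¹ *ᵥ (x - xs m)) j) from
      Finset.sum_congr rfl fun m _ => by rw [hAij m i j]; ring]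
    ring
  rw [hessEq]
  apply Matrix.PosSemidef.add
  · apply posSemidef_smul' (inv_nonneg.mpr (hfpos x).le)
    apply posSemidef_sum'
    intro m
    apply posSemidef_smul' (mul_nonneg (hw m) (hgpos m x).le)
    refine Matrix.PosSemidef.of_dotProduct_mulVec_nonneg ?_ (fun v => ?_)
    · ext i j
      simp only [Matrix.conjTranspose_apply, Matrix.sub_apply, vecMulVec_apply, star_trivial]
      rw [hAij m j i]
      ring
    · simp only [star_trivial, Matrix.sub_mulVec, dotProduct_sub, vecMulVec_mulVec',
        dotProduct_smul, smul_eq_mul]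
      have hq := quad_bound (hpd m) (hpsd m) v
      rw [dotProduct_comm v ((Ss m + t • 1)⁻¹ *ᵥ (x - xs m))]
      rw [sq] at hq
      linarith
  · exact posSemidef_smul' (mul_nonneg (inv_nonneg.mpr (hfpos x).le)
      (inv_nonneg.mpr (hfpos x).le)) (posSemidef_vecMulVec_self _)
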